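/- arXiv:2509.07198 — 3 statements merged into one kernel-verified Lean document; each statement's English description precedes it below -/
import Mathlib

section
/- Let X be a nonempty set, let M ≥ 0, let γ ∈ (0,1), let w ≥ 1 be an integer, and set W = Σ_{j=0}^{w−1} γ^j. Let (f_s)_{s ∈ ℤ} be a family of functions f_s : X → ℝ satisfying |f_s(x)| ≤ M for all s ∈ ℤ and x ∈ X, and let (θ_s)_{s ∈ ℤ} be a sequence of points of X. Then for every t ∈ ℤ, (1/W) · Σ_{j=0}^{w−1} γ^j · ( f_{t+1−j}(θ_{t+1−j}) − f_{t−j}(θ_{t+1−j}) ) ≤ M(1+γ^{w−1})/W + M(1−γ^{w−1})(1+γ)/(W(1−γ)). -/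
/-- Lemma 2: drift bound on the difference of smoothed regrets. -/
theorem smoothed_regret_forward_drift_bound
    {X : Type*} [Nonempty X] (M : ℝ) (hM : 0 ≤ M)
    (γ : ℝ) (hγ : γ ∈ Set.Ioo (0 : ℝ) 1) (w : ℕ) (hw : 1 ≤ w)
    (W : ℝ) (hW : W = ∑ j ∈ Finset.range w, γ ^ j)
    (f : ℤ → X → ℝ) (hf : ∀ (s : ℤ) (x : X), |f s x| ≤ M)
    (θ : ℤ → X) (t : ℤ) :
    (1 / W) * ∑ j ∈ Finset.range w,
        γ ^ j * (f (t + 1 - j) (θ (t + 1 - j)) - f (t - j) (θ (t + 1 - j)))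
      ≤ M * (1 + γ ^ (w - 1)) / W
        + M * (1 - γ ^ (w - 1)) * (1 + γ) / (W * (1 - γ)) := by
  obtain ⟨hγ0, hγ1⟩ := hγ
  have hWpos : 0 < W := by
    rw [hW]
    apply Finset.sum_pos
    · intro j _; positivity
    · exact ⟨0, Finset.mem_range.mpr hw⟩
  have hgeom : W * (1 - γ) = 1 - γ ^ w := by
    have := geom_sum_mul γ w
    rw [hW]
    nlinarith [this]
  have hpow : γ ^ (w - 1) * γ = γ ^ w := by
    rw [← pow_succ]
    congr 1
    omega
  have hrhs : M * (1 + γ ^ (w - 1)) / W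
        + M * (1 - γ ^ (w - 1)) * (1 + γ) / (W * (1 - γ)) = 2 * M := by
    have h1γ : (1 : ℝ) - γ ≠ 0 := by linarith
    field_simp
    linear_combination (-2*M)*hgeom + (-2*M)*hpow
  rw [hrhs]
  have hsum : ∑ j ∈ Finset.range w,
      γ ^ j * (f (t + 1 - j) (θ (t + 1 - j)) - f (t - j) (θ (t + 1 - j)))
      ≤ ∑ j ∈ Finset.range w, γ ^ j * (2 * M) := by
    apply Finset.sum_le_sum
    intro j _
    have h1 := abs_le.mp (hf (t + 1 - j) (θ (t + 1 - j)))
    have h2 := abs_le.mp (hf (t - j) (θ (t + 1 - j)))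
    have hgj : (0 : ℝ) < γ ^ j := by positivity
    nlinarith [h1.1, h1.2, h2.1, h2.2]
  calc (1 / W) * ∑ j ∈ Finset.range w,
        γ ^ j * (f (t + 1 - j) (θ (t + 1 - j)) - f (t - j) (θ (t + 1 - j)))
      ≤ (1 / W) * ∑ j ∈ Finset.range w, γ ^ j * (2 * M) := by
        apply mul_le_mul_of_nonneg_left hsum; positivity
    _ = 2 * M := by
        rw [← Finset.sum_mul, ← hW]
        field_simp
end

section
/- Let x_1, …, x_n ∈ ℝ^d (n ≥ 1), let θ be a real r × d matrix, and on a probability space let ξ, ξ' : Ω → ℝ^r be square-integrable random vectors with E[ξ] = 0, E[ξ'] = 0 and E[⟨ξ, ξ'⟩] = 0 (for instance, ξ and ξ' independent and zero-mean). Define f(θ) = −(1/n) Σ_{i=1}^n E[ ⟨θ x_i + ξ, θ x_i + ξ'⟩ ] + (1/2)‖θᵀθ‖_F², and let X̄ = (1/n) Σ_{i=1}^n x_i x_iᵀ be the empirical covariance matrix. Then f(θ) = (1/2)‖X̄ − θᵀθ‖_F² − (1/2)‖X̄‖_F². Consequently, a matrix θ* minimizes f over any set of r × d matrices if and only if θ*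 minimizes θ ↦ ‖X̄ − θᵀθ‖_F² over that set. -/
open MeasureTheory

/-- The simplified self-supervised loss equals the matrix-factorization objective
(1/2)‖X̄ − θᵀθ‖_F² up to the constant −(1/2)‖X̄‖_F²; consequently minimizing it is
equivalent to minimizing θ ↦ ‖X̄ − θᵀθ‖_F². -/
theorem ssl_loss_equivalent_to_matrix_factorization
    (n d r : ℕ) (hn : 1 ≤ n)
    {Ω : Type*} [MeasurableSpace Ω] (μ : Measure Ω) [IsProbabilityMeasure μ]
    (x : Fin n → Fin d → ℝ)
    (ξ ξ' : Ω → Fin r → ℝ)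
    (hξ2 : MemLp ξ 2 μ) (hξ'2 : MemLp ξ' 2 μ)
    (hξmean : ∫ ω, ξ ω ∂μ = 0) (hξ'mean : ∫ ω, ξ' ω ∂μ = 0)
    (horth : ∫ ω, ∑ j, ξ ω j * ξ' ω j ∂μ = 0)
    (f : Matrix (Fin r) (Fin d) ℝ → ℝ)
    (hf : ∀ θ : Matrix (Fin r) (Fin d) ℝ,
      f θ = -((1 / (n : ℝ)) * ∑ i, ∫ ω,
            ∑ j, (θ.mulVec (x i) j + ξ ω j) * (θ.mulVec (x i) j + ξ' ω j) ∂μ)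
        + (1 / 2) * ∑ a, ∑ b, ((θ.transpose * θ) a b) ^ 2)
    (Xbar : Matrix (Fin d) (Fin d) ℝ)
    (hXbar : Xbar = (1 / (n : ℝ)) • ∑ i, Matrix.vecMulVec (x i) (x i)) :
    (∀ θ : Matrix (Fin r) (Fin d) ℝ,
        f θ = (1 / 2) * ∑ a, ∑ b, ((Xbar - θ.transpose * θ) a b) ^ 2
          - (1 / 2) * ∑ a, ∑ b, (Xbar a b) ^ 2)
    ∧ ∀ (S : Set (Matrix (Fin r) (Fin d) ℝ)) (θstar : Matrix (Fin r) (Fin d) ℝ),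
        θstar ∈ S →
        ((∀ θ ∈ S, f θstar ≤ f θ) ↔
          (∀ θ ∈ S, ∑ a, ∑ b, ((Xbar - θstar.transpose * θstar) a b) ^ 2
            ≤ ∑ a, ∑ b, ((Xbar - θ.transpose * θ) a b) ^ 2)) := by
  -- Step 1: the integral of the noisy inner product equals the noiseless one.
  have hcomp : ∀ (g : Ω → Fin r → ℝ), MemLp g 2 μ → ∀ j, MemLp (fun ω => g ω j) 2 μ := by
    intro g hg j
    exact (ContinuousLinearMap.proj (R := ℝ) (φ := fun _ : Fin r => ℝ) j).comp_memLp' hg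
  have hintL : ∀ (g : Ω → Fin r → ℝ), MemLp g 2 μ → Integrable g μ := fun g hg =>
    hg.integrable (by norm_num)
  have h12 : (1:ENNReal)/1 = 1/2 + 1/2 := by
    rw [ENNReal.div_add_div_same, one_add_one_eq_two, ENNReal.div_self (by norm_num) (by norm_num),
      ENNReal.div_self (by norm_num) (by norm_num)]
  have hij : ∀ j, Integrable (fun ω => ξ ω j * ξ' ω j) μ := by
    intro j
    have h := ((hcomp ξ hξ2 j).smul (r := 1) (hcomp ξ' hξ'2 j))
    have h' : MemLp (fun ω => ξ' ω j * ξ ω j) 1 μ := h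
    rw [memLp_one_iff_integrable] at h'
    simpa [mul_comm] using h'
  have hiξ : ∀ j, Integrable (fun ω => ξ ω j) μ := fun j =>
    memLp_one_iff_integrable.mp ((hcomp ξ hξ2 j).mono_exponent (by norm_num))
  have hiξ' : ∀ j, Integrable (fun ω => ξ' ω j) μ := fun j =>
    memLp_one_iff_integrable.mp ((hcomp ξ' hξ'2 j).mono_exponent (by norm_num))
  have hmeanj : ∀ j, ∫ ω, ξ ω j ∂μ = 0 := by
    intro j
    have h := (ContinuousLinearMap.proj (R := ℝ) (φ := fun _ : Fin r => ℝ) j).integral_comp_comm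
      (hintL ξ hξ2)
    simpa [hξmean] using h
  have hmean'j : ∀ j, ∫ ω, ξ' ω j ∂μ = 0 := by
    intro j
    have h := (ContinuousLinearMap.proj (R := ℝ) (φ := fun _ : Fin r => ℝ) j).integral_comp_comm
      (hintL ξ' hξ'2)
    simpa [hξ'mean] using h
  have hInt : ∀ u : Fin r → ℝ,
      ∫ ω, ∑ j, (u j + ξ ω j) * (u j + ξ' ω j) ∂μ = ∑ j, u j * u j := by
    intro u
    have hint1 : Integrable (fun ω => ∑ j, (u j * u j + u j * ξ' ω j + ξ ω j * u j)) μ :=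
      integrable_finset_sum _ fun j _ =>
        ((integrable_const _).add ((hiξ' j).const_mul _)).add ((hiξ j).mul_const _)
    have hint2 : Integrable (fun ω => ∑ j, ξ ω j * ξ' ω j) μ :=
      integrable_finset_sum _ fun j _ => hij j
    calc ∫ ω, ∑ j, (u j + ξ ω j) * (u j + ξ' ω j) ∂μ
        = ∫ ω, ((∑ j, (u j * u j + u j * ξ' ω j + ξ ω j * u j)) + ∑ j, ξ ω j * ξ' ω j) ∂μ := by
          apply integral_congr_ae; filter_upwards with ω
          rw [← Finset.sum_add_distrib]; exact Finset.sum_congr rfl fun j _ => by ring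
      _ = (∫ ω, ∑ j, (u j * u j + u j * ξ' ω j + ξ ω j * u j) ∂μ)
            + ∫ ω, ∑ j, ξ ω j * ξ' ω j ∂μ := integral_add hint1 hint2
      _ = ∑ j, u j * u j := by
          have hI : ∀ j ∈ Finset.univ,
              Integrable (fun ω => u j * u j + u j * ξ' ω j + ξ ω j * u j) μ := fun j _ =>
            ((integrable_const _).add ((hiξ' j).const_mul _)).add ((hiξ j).mul_const _)
          rw [horth, add_zero, integral_finset_sum _ hI]
          refine Finset.sum_congr rfl fun j _ => ?_
          have e1 : ∫ ω, (u j * u j + u j * ξ' ω j + ξ ω j * u j) ∂μ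
              = (∫ ω, (u j * u j + u j * ξ' ω j) ∂μ) + ∫ ω, ξ ω j * u j ∂μ :=
            integral_add ((integrable_const _).add ((hiξ' j).const_mul _)) ((hiξ j).mul_const _)
          have e2 : ∫ ω, (u j * u j + u j * ξ' ω j) ∂μ
              = (∫ ω, (u j * u j : ℝ) ∂μ) + ∫ ω, u j * ξ' ω j ∂μ :=
            integral_add (integrable_const _) ((hiξ' j).const_mul _)
          rw [e1, e2, integral_const, integral_const_mul, integral_mul_const, hmeanj, hmean'j]
          simp
  -- Step 2: the quadratic form identity.
  have hkey : ∀ θ : Matrix (Fin r) (Fin d) ℝ,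
      (1 / (n : ℝ)) * ∑ i, ∑ j, θ.mulVec (x i) j * θ.mulVec (x i) j
        = ∑ a, ∑ b, Xbar a b * (θ.transpose * θ) a b := by
    intro θ
    have hq : ∀ u : Fin d → ℝ, ∑ j, θ.mulVec u j * θ.mulVec u j
        = ∑ a, ∑ b, (u a * u b) * (θ.transpose * θ) a b := by
      intro u
      simp only [Matrix.mulVec, dotProduct, Matrix.mul_apply, Matrix.transpose_apply,
        Finset.sum_mul_sum, Finset.mul_sum, Finset.sum_mul]
      rw [Finset.sum_congr rfl fun j (_ : j ∈ Finset.univ) => Finset.sum_comm]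
      rw [Finset.sum_comm]
      refine Finset.sum_congr rfl fun a _ => ?_
      rw [Finset.sum_comm]
      exact Finset.sum_congr rfl fun b _ => Finset.sum_congr rfl fun j _ => by ring
    have hX : ∀ a b, Xbar a b = (1 / (n : ℝ)) * ∑ i, x i a * x i b := by
      intro a b
      simp [hXbar, Matrix.smul_apply, Matrix.sum_apply, Matrix.vecMulVec_apply, smul_eq_mul,
        Finset.mul_sum]
    calc (1 / (n : ℝ)) * ∑ i, ∑ j, θ.mulVec (x i) j * θ.mulVec (x i) j
        = (1 / (n : ℝ)) * ∑ i, ∑ a, ∑ b, (x i a * x i b) * (θ.transpose * θ) a b := by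
          rw [Finset.sum_congr rfl fun i _ => hq (x i)]
      _ = ∑ a, ∑ b, Xbar a b * (θ.transpose * θ) a b := by
          have hXM : ∀ a b, Xbar a b * (θ.transpose * θ) a b
              = ∑ i, (1 / (n : ℝ)) * ((x i a * x i b) * (θ.transpose * θ) a b) := by
            intro a b
            rw [hX a b, Finset.mul_sum, Finset.sum_mul]
            exact Finset.sum_congr rfl fun i _ => by ring
          simp only [Finset.mul_sum]
          rw [Finset.sum_comm]
          refine Finset.sum_congr rfl fun a _ => ?_
          rw [Finset.sum_comm]
          refine Finset.sum_congr rfl fun b _ => ?_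
          rw [hXM a b]
  -- Step 3: the main identity.
  have hmain : ∀ θ : Matrix (Fin r) (Fin d) ℝ,
      f θ = (1 / 2) * ∑ a, ∑ b, ((Xbar - θ.transpose * θ) a b) ^ 2
        - (1 / 2) * ∑ a, ∑ b, (Xbar a b) ^ 2 := by
    intro θ
    set M := θ.transpose * θ with hM
    have hfθ : f θ = -((1 / (n : ℝ)) * ∑ i, ∑ j, θ.mulVec (x i) j * θ.mulVec (x i) j)
        + (1 / 2) * ∑ a, ∑ b, (M a b) ^ 2 := by
      have hsum : ∑ i, ∫ ω, ∑ j, (θ.mulVec (x i) j + ξ ω j) * (θ.mulVec (x i) j + ξ' ω j) ∂μ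
          = ∑ i, ∑ j, θ.mulVec (x i) j * θ.mulVec (x i) j :=
        Finset.sum_congr rfl fun i _ => hInt (θ.mulVec (x i))
      rw [hf θ, hsum]
    rw [hfθ, hkey θ]
    have hexp : ∑ a, ∑ b, ((Xbar - M) a b) ^ 2
        = ∑ a, ∑ b, ((Xbar a b) ^ 2 - 2 * (Xbar a b * M a b) + (M a b) ^ 2) := by
      refine Finset.sum_congr rfl fun a _ => Finset.sum_congr rfl fun b _ => ?_
      rw [Matrix.sub_apply]; ring
    have hsplit : ∑ a, ∑ b, ((Xbar a b) ^ 2 - 2 * (Xbar a b * M a b) + (M a b) ^ 2)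
        = (∑ a, ∑ b, (Xbar a b) ^ 2) - 2 * (∑ a, ∑ b, Xbar a b * M a b)
          + ∑ a, ∑ b, (M a b) ^ 2 := by
      simp [Finset.sum_add_distrib, Finset.sum_sub_distrib, Finset.mul_sum]
    rw [hexp, hsplit]
    ring
  refine ⟨hmain, fun S θstar hθs => ?_⟩
  constructor
  · intro h θ hθ
    have h1 := h θ hθ
    rw [hmain θstar, hmain θ] at h1
    linarith
  · intro h θ hθ
    have h1 := h θ hθ
    rw [hmain θstar, hmain θ]
    linarith
end

section
/- Let X be a symmetric positive semidefinite real d × d matrix with largest eigenvalue λ₁(X) ≤ Γ. Then for all U, V ∈ ℝ^{d×r} with ‖U‖_F² ≤ Γ and ‖V‖_F² ≤ Γ, one has ‖2(UUᵀ − X)U − 2(VVᵀ − X)V‖_F ≤ 16Γ·‖U − V‖_F. -/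
open Matrix

attribute [local instance] Matrix.frobeniusNormedAddCommGroup Matrix.frobeniusNormedSpace

lemma frob_sq {m n : ℕ} (A : Matrix (Fin m) (Fin n) ℝ) :
    ‖A‖ ^ 2 = (Aᵀ * A).trace := by
  rw [frobenius_norm_def, ← Real.rpow_natCast _ 2, ← Real.rpow_mul (by positivity)]
  norm_num
  unfold Matrix.trace Matrix.diag
  simp only [mul_apply, transpose_apply]
  rw [Finset.sum_comm]
  congr 1
  ext i
  congr 1
  ext j
  ring

lemma trace_nonneg' {n : ℕ} {M : Matrix (Fin n) (Fin n) ℝ} (hM : M.PosSemidef) :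
    0 ≤ M.trace := by
  apply Finset.sum_nonneg
  intro i _
  exact hM.diag_nonneg

lemma psd_gap {d : ℕ} (Γ : ℝ) (X : Matrix (Fin d) (Fin d) ℝ) (hX : X.PosSemidef)
    (hΓ : ∀ i, hX.1.eigenvalues i ≤ Γ) :
    ((Γ ^ 2) • (1 : Matrix (Fin d) (Fin d) ℝ) - X * X).PosSemidef := by
  have hQ := hX.1.spectral_theorem
  set Q : Matrix (Fin d) (Fin d) ℝ := (IsHermitian.eigenvectorUnitary hX.1 : Matrix (Fin d) (Fin d) ℝ) with hQdef
  have h2 : star Q * Q = 1 := Matrix.mem_unitaryGroup_iff'.mp (IsHermitian.eigenvectorUnitary hX.1).2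
  have h1 : Q * star Q = 1 := Matrix.mem_unitaryGroup_iff.mp (IsHermitian.eigenvectorUnitary hX.1).2
  set D : Matrix (Fin d) (Fin d) ℝ := diagonal (RCLike.ofReal ∘ hX.1.eigenvalues) with hDdef
  have e1 : X * X = Q * (D * D) * star Q := by
    conv_lhs => rw [hQ]
    rw [Unitary.conjStarAlgAut_apply, ← hQdef]
    have : Q * D * star Q * (Q * D * star Q) = Q * (D * (star Q * Q) * D) * star Q := by
      simp only [Matrix.mul_assoc]
    rw [this, h2, Matrix.mul_one]
  have e2 : (Γ ^ 2) • (1 : Matrix (Fin d) (Fin d) ℝ) = Q * ((Γ ^ 2) • 1) * star Q := by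
    rw [Matrix.mul_smul, Matrix.mul_one, Matrix.smul_mul, h1]
  rw [e1, e2, ← Matrix.sub_mul, ← Matrix.mul_sub]
  have e3 : (Γ ^ 2) • (1 : Matrix (Fin d) (Fin d) ℝ) - D * D
      = diagonal (fun i => Γ ^ 2 - (hX.1.eigenvalues i) ^ 2) := by
    ext i j
    rcases eq_or_ne i j with h | h
    · subst h; simp [hDdef, sq]
    · simp [hDdef, h, Matrix.one_apply_ne h]
  rw [e3]
  have hpsd : ((diagonal (fun i => Γ ^ 2 - (hX.1.eigenvalues i) ^ 2) : Matrix (Fin d) (Fin d) ℝ)).PosSemidef := by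
    apply Matrix.PosSemidef.diagonal
    intro i
    have h0 := hX.eigenvalues_nonneg i
    have := hΓ i
    simp only [Pi.zero_apply]
    nlinarith
  have := hpsd.mul_mul_conjTranspose_same Q
  simpa [Matrix.star_eq_conjTranspose] using this
lemma mul_frob_le {d r : ℕ} (Γ : ℝ) (hΓ0 : 0 ≤ Γ) (X : Matrix (Fin d) (Fin d) ℝ)
    (hX : X.PosSemidef) (hΓ : ∀ i, hX.1.eigenvalues i ≤ Γ)
    (M : Matrix (Fin d) (Fin r) ℝ) : ‖X * M‖ ≤ Γ * ‖M‖ := by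
  have hsq : ‖X * M‖ ^ 2 ≤ (Γ * ‖M‖) ^ 2 := by
    rw [frob_sq, mul_pow, frob_sq]
    have hXt : Xᵀ = X := by
      have := hX.1
      rwa [Matrix.IsHermitian, Matrix.conjTranspose_eq_transpose_of_trivial] at this
    have h1 : (X * M)ᵀ * (X * M) = Mᵀ * (X * X) * M := by
      rw [Matrix.transpose_mul, hXt]
      simp only [Matrix.mul_assoc]
    rw [h1]
    have hpsd := (psd_gap Γ X hX hΓ).conjTranspose_mul_mul_same M
    rw [Matrix.conjTranspose_eq_transpose_of_trivial] at hpsd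
    have htr := trace_nonneg' hpsd
    have h2 : Mᵀ * ((Γ ^ 2) • (1 : Matrix (Fin d) (Fin d) ℝ) - X * X) * M
        = (Γ ^ 2) • (Mᵀ * M) - Mᵀ * (X * X) * M := by
      rw [Matrix.mul_sub, Matrix.sub_mul, Matrix.mul_smul, Matrix.mul_one, Matrix.smul_mul]
    rw [h2, Matrix.trace_sub, Matrix.trace_smul] at htr
    simp only [smul_eq_mul] at htr
    linarith
  have h1 : (0:ℝ) ≤ ‖X * M‖ := norm_nonneg _
  have h2 : (0:ℝ) ≤ Γ * ‖M‖ := mul_nonneg hΓ0 (norm_nonneg _)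
  nlinarith

/-- 16Γ-smoothness of the matrix-factorization objective within the Frobenius
ball ‖U‖² ≤ Γ, when the PSD matrix X has largest eigenvalue at most Γ. -/
theorem matrix_factorization_gradient_lipschitz
    (d r : ℕ) (Γ : ℝ) (X : Matrix (Fin d) (Fin d) ℝ)
    (hX : X.PosSemidef) (hΓ : ∀ i, hX.1.eigenvalues i ≤ Γ)
    (U V : Matrix (Fin d) (Fin r) ℝ)
    (hU : ‖U‖ ^ 2 ≤ Γ) (hV : ‖V‖ ^ 2 ≤ Γ) :
    ‖2 • ((U * Uᵀ - X) * U) - 2 • ((V * Vᵀ - X) * V)‖ ≤ 16 * Γ * ‖U - V‖ := by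
  have hΓ0 : 0 ≤ Γ := le_trans (by positivity) hU
  have expand : 2 • ((U * Uᵀ - X) * U) - 2 • ((V * Vᵀ - X) * V)
      = 2 • ((U - V) * Uᵀ * U + V * (U - V)ᵀ * U + V * Vᵀ * (U - V) - X * (U - V)) := by
    rw [← smul_sub]
    congr 1
    simp only [Matrix.sub_mul, Matrix.mul_sub, Matrix.transpose_sub]
    abel
  rw [expand, two_smul]
  set C := (U - V) * Uᵀ * U + V * (U - V)ᵀ * U + V * Vᵀ * (U - V) - X * (U - V) with hC
  have hCle : ‖C‖ ≤ 4 * Γ * ‖U - V‖ := by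
    have t1 : ‖(U - V) * Uᵀ * U‖ ≤ Γ * ‖U - V‖ := by
      calc ‖(U - V) * Uᵀ * U‖ ≤ ‖(U - V) * Uᵀ‖ * ‖U‖ := frobenius_norm_mul _ _
        _ ≤ ‖U - V‖ * ‖Uᵀ‖ * ‖U‖ :=
          mul_le_mul_of_nonneg_right (frobenius_norm_mul _ _) (norm_nonneg _)
        _ = ‖U - V‖ * (‖U‖ ^ 2) := by rw [frobenius_norm_transpose]; ring
        _ ≤ ‖U - V‖ * Γ := mul_le_mul_of_nonneg_left hU (norm_nonneg _)
        _ = Γ * ‖U - V‖ := mul_comm _ _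
    have t2 : ‖V * (U - V)ᵀ * U‖ ≤ Γ * ‖U - V‖ := by
      have : ‖V * (U - V)ᵀ * U‖ ≤ ‖V‖ * ‖U - V‖ * ‖U‖ := by
        calc ‖V * (U - V)ᵀ * U‖ ≤ ‖V * (U - V)ᵀ‖ * ‖U‖ := frobenius_norm_mul _ _
          _ ≤ ‖V‖ * ‖(U - V)ᵀ‖ * ‖U‖ :=
            mul_le_mul_of_nonneg_right (frobenius_norm_mul _ _) (norm_nonneg _)
          _ = ‖V‖ * ‖U - V‖ * ‖U‖ := by rw [frobenius_norm_transpose]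
      have h1 : (0:ℝ) ≤ ‖U‖ := norm_nonneg _
      have h2 : (0:ℝ) ≤ ‖V‖ := norm_nonneg _
      have h3 : (0:ℝ) ≤ ‖U - V‖ := norm_nonneg _
      nlinarith [sq_nonneg (‖U‖ - ‖V‖)]
    have t3 : ‖V * Vᵀ * (U - V)‖ ≤ Γ * ‖U - V‖ := by
      calc ‖V * Vᵀ * (U - V)‖ ≤ ‖V * Vᵀ‖ * ‖U - V‖ := frobenius_norm_mul _ _
        _ ≤ ‖V‖ * ‖Vᵀ‖ * ‖U - V‖ :=
          mul_le_mul_of_nonneg_right (frobenius_norm_mul _ _) (norm_nonneg _)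
        _ = ‖V‖ ^ 2 * ‖U - V‖ := by rw [frobenius_norm_transpose]; ring
        _ ≤ Γ * ‖U - V‖ := mul_le_mul_of_nonneg_right hV (norm_nonneg _)
    have t4 : ‖X * (U - V)‖ ≤ Γ * ‖U - V‖ := mul_frob_le Γ hΓ0 X hX hΓ _
    calc ‖C‖ ≤ ‖(U - V) * Uᵀ * U + V * (U - V)ᵀ * U + V * Vᵀ * (U - V)‖ + ‖X * (U - V)‖ :=
        norm_sub_le _ _
      _ ≤ ‖(U - V) * Uᵀ * U + V * (U - V)ᵀ * U‖ + ‖V * Vᵀ * (U - V)‖ + ‖X * (U - V)‖ := by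
        gcongr; exact norm_add_le _ _
      _ ≤ ‖(U - V) * Uᵀ * U‖ + ‖V * (U - V)ᵀ * U‖ + ‖V * Vᵀ * (U - V)‖ + ‖X * (U - V)‖ := by
        gcongr; exact norm_add_le _ _
      _ ≤ 4 * Γ * ‖U - V‖ := by linarith
  calc ‖C + C‖ ≤ ‖C‖ + ‖C‖ := norm_add_le _ _
    _ ≤ 16 * Γ * ‖U - V‖ := by
      have : (0:ℝ) ≤ Γ * ‖U - V‖ := mul_nonneg hΓ0 (norm_nonneg _)
      linarith
end
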